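/- For every integer n > 1, the continued fraction of √(n²+2n-1) is [n; 1, n-1, 1, 2n repeated], so its period has length 4. -/

import Mathlib

/-- The sequence of complete quotients of the continued fraction algorithm. -/
noncomputable def cfX (x : ℝ) : ℕ → ℝ
  | 0 => x
  | n + 1 =>
    if cfX x n - ⌊cfX x n⌋ = 0 then 0 else 1 / (cfX x n - ⌊cfX x n⌋)

/-- The partial quotients (continued fraction expansion) of a real number. -/
noncomputable def cfA (x : ℝ) (n : ℕ) : ℤ := ⌊cfX x n⌋

lemma cf_step (x : ℝ) (m : ℕ) (y : ℝ) (h : cfX x m = y) (a : ℤ) (ha : ⌊y⌋ = a)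
    (hne : y - (a : ℝ) ≠ 0) : cfX x (m + 1) = 1 / (y - (a : ℝ)) := by
  simp [cfX, h, ha, hne]

set_option maxHeartbeats 1000000 in
/-- For `n > 1`, `√(n²+2n-1) = [n; 1, n-1, 1, 2n repeated]`, with period of length 4. -/
theorem sqrt_sq_add_two_n_sub_one (n : ℕ) (hn : 1 < n) :
    cfA (Real.sqrt ((n : ℝ) ^ 2 + (2 * (n : ℝ) - 1))) 0 = n ∧
    (∀ k : ℕ,
      cfA (Real.sqrt ((n : ℝ) ^ 2 + (2 * (n : ℝ) - 1))) (4 * k + 1) = 1 ∧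
      cfA (Real.sqrt ((n : ℝ) ^ 2 + (2 * (n : ℝ) - 1))) (4 * k + 2) = (n : ℤ) - 1 ∧
      cfA (Real.sqrt ((n : ℝ) ^ 2 + (2 * (n : ℝ) - 1))) (4 * k + 3) = 1 ∧
      cfA (Real.sqrt ((n : ℝ) ^ 2 + (2 * (n : ℝ) - 1))) (4 * k + 4) = 2 * n) ∧
    sInf {p : ℕ | 0 < p ∧ ∀ m : ℕ, 1 ≤ m →
      cfA (Real.sqrt ((n : ℝ) ^ 2 + (2 * (n : ℝ) - 1))) (m + p) = cfA (Real.sqrt ((n : ℝ) ^ 2 + (2 * (n : ℝ) - 1))) m} = 4 := by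
  have hn2 : (2 : ℝ) ≤ (n : ℝ) := by exact_mod_cast hn
  set x : ℝ := Real.sqrt ((n : ℝ) ^ 2 + (2 * (n : ℝ) - 1)) with hxdef
  have hNnn : (0 : ℝ) ≤ (n : ℝ) ^ 2 + (2 * (n : ℝ) - 1) := by nlinarith
  have hx2 : x ^ 2 = (n : ℝ) ^ 2 + (2 * (n : ℝ) - 1) := Real.sq_sqrt hNnn
  have hxpos : 0 < x := Real.sqrt_pos.mpr (by nlinarith)
  have hlb : (n : ℝ) < x := by nlinarith [hx2, hxpos]
  have hub : x < (n : ℝ) + 1 := by nlinarith [hx2, hxpos]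
  have hd : (0 : ℝ) < 2 * (n : ℝ) - 1 := by linarith
  have hxc : x - (n : ℝ) ≠ 0 := by intro h; nlinarith
  -- floors of the four cycle values
  have hfx : ⌊x⌋ = (n : ℤ) := by
    rw [Int.floor_eq_iff]; push_cast; exact ⟨le_of_lt hlb, hub⟩
  have hf1 : ⌊(x + (n : ℝ)) / (2 * (n : ℝ) - 1)⌋ = 1 := by
    rw [Int.floor_eq_iff]
    constructor
    · rw [le_div_iff₀ hd]; push_cast; linarith
    · rw [div_lt_iff₀ hd]; push_cast; linarith
  have hf2 : ⌊(x + (n : ℝ) - 1) / 2⌋ = (n : ℤ) - 1 := by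
    rw [Int.floor_eq_iff]
    constructor
    · rw [le_div_iff₀ (by norm_num : (0:ℝ) < 2)]; push_cast; linarith
    · rw [div_lt_iff₀ (by norm_num : (0:ℝ) < 2)]; push_cast; linarith
  have hf3 : ⌊(x + (n : ℝ) - 1) / (2 * (n : ℝ) - 1)⌋ = 1 := by
    rw [Int.floor_eq_iff]
    constructor
    · rw [le_div_iff₀ hd]; push_cast; linarith
    · rw [div_lt_iff₀ hd]; push_cast; linarith
  have hf4 : ⌊x + (n : ℝ)⌋ = 2 * (n : ℤ) := by
    rw [Int.floor_eq_iff]; push_cast; constructor <;> linarith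
  -- step computations
  have step_x : ∀ m, cfX x m = x → cfX x (m + 1) = (x + (n : ℝ)) / (2 * (n : ℝ) - 1) := by
    intro m hm
    have hne : x - ((n : ℤ) : ℝ) ≠ 0 := by push_cast; exact hxc
    rw [cf_step x m x hm (n : ℤ) hfx hne]
    push_cast
    rw [div_eq_div_iff hxc (ne_of_gt hd)]
    nlinarith [hx2]
  have step1 : ∀ m, cfX x m = (x + (n : ℝ)) / (2 * (n : ℝ) - 1) →
      cfX x (m + 1) = (x + (n : ℝ) - 1) / 2 := by
    intro m hm
    have hne : (x + (n : ℝ)) / (2 * (n : ℝ) - 1) - ((1 : ℤ) : ℝ) ≠ 0 := by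
      push_cast
      have : (1 : ℝ) < (x + (n : ℝ)) / (2 * (n : ℝ) - 1) := by
        rw [lt_div_iff₀ hd]; linarith
      intro h; linarith
    rw [cf_step x m _ hm 1 hf1 hne]
    have h1 : (x + (n : ℝ)) / (2 * (n : ℝ) - 1) - ((1 : ℤ) : ℝ)
        = (x - ((n : ℝ) - 1)) / (2 * (n : ℝ) - 1) := by
      push_cast; rw [div_sub_one (ne_of_gt hd)]; ring
    rw [h1, one_div_div, div_eq_div_iff
      (by intro h; nlinarith : x - ((n : ℝ) - 1) ≠ 0) (by norm_num : (2:ℝ) ≠ 0)]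
    nlinarith [hx2]
  have step2 : ∀ m, cfX x m = (x + (n : ℝ) - 1) / 2 →
      cfX x (m + 1) = (x + (n : ℝ) - 1) / (2 * (n : ℝ) - 1) := by
    intro m hm
    have hne : (x + (n : ℝ) - 1) / 2 - (((n : ℤ) - 1 : ℤ) : ℝ) ≠ 0 := by
      push_cast; intro h; nlinarith
    rw [cf_step x m _ hm ((n : ℤ) - 1) hf2 hne]
    have h1 : (x + (n : ℝ) - 1) / 2 - (((n : ℤ) - 1 : ℤ) : ℝ)
        = (x - ((n : ℝ) - 1)) / 2 := by
      push_cast; field_simp; ring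
    rw [h1, one_div_div, div_eq_div_iff
      (by intro h; nlinarith : x - ((n : ℝ) - 1) ≠ 0) (ne_of_gt hd)]
    nlinarith [hx2]
  have step3 : ∀ m, cfX x m = (x + (n : ℝ) - 1) / (2 * (n : ℝ) - 1) →
      cfX x (m + 1) = x + (n : ℝ) := by
    intro m hm
    have hne : (x + (n : ℝ) - 1) / (2 * (n : ℝ) - 1) - ((1 : ℤ) : ℝ) ≠ 0 := by
      push_cast
      have : (1 : ℝ) < (x + (n : ℝ) - 1) / (2 * (n : ℝ) - 1) := by
        rw [lt_div_iff₀ hd]; linarith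
      intro h; linarith
    rw [cf_step x m _ hm 1 hf3 hne]
    have h1 : (x + (n : ℝ) - 1) / (2 * (n : ℝ) - 1) - ((1 : ℤ) : ℝ)
        = (x - (n : ℝ)) / (2 * (n : ℝ) - 1) := by
      push_cast; rw [div_sub_one (ne_of_gt hd)]; ring
    rw [h1, one_div_div, div_eq_iff hxc]
    nlinarith [hx2]
  have step4 : ∀ m, cfX x m = x + (n : ℝ) →
      cfX x (m + 1) = (x + (n : ℝ)) / (2 * (n : ℝ) - 1) := by
    intro m hm
    have hne : x + (n : ℝ) - ((2 * (n : ℤ) : ℤ) : ℝ) ≠ 0 := by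
      push_cast; intro h; nlinarith
    rw [cf_step x m _ hm (2 * (n : ℤ)) hf4 hne]
    have h1 : x + (n : ℝ) - ((2 * (n : ℤ) : ℤ) : ℝ) = x - (n : ℝ) := by
      push_cast; ring
    rw [h1, div_eq_div_iff hxc (ne_of_gt hd)]
    nlinarith [hx2]
  have hX0 : cfX x 0 = x := rfl
  -- the cycle
  have hcyc : ∀ k : ℕ, cfX x (4 * k + 1) = (x + (n : ℝ)) / (2 * (n : ℝ) - 1) ∧
      cfX x (4 * k + 2) = (x + (n : ℝ) - 1) / 2 ∧
      cfX x (4 * k + 3) = (x + (n : ℝ) - 1) / (2 * (n : ℝ) - 1) ∧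
      cfX x (4 * k + 4) = x + (n : ℝ) := by
    intro k
    induction k with
    | zero =>
      have h1 := step_x 0 hX0
      have h2 := step1 1 h1
      have h3 := step2 2 h2
      have h4 := step3 3 h3
      exact ⟨h1, h2, h3, h4⟩
    | succ k ih =>
      have h1 : cfX x (4 * (k + 1) + 1) = (x + (n : ℝ)) / (2 * (n : ℝ) - 1) := by
        have := step4 (4 * k + 4) ih.2.2.2
        rwa [show 4 * k + 4 + 1 = 4 * (k + 1) + 1 by ring] at this
      have h2 := step1 _ h1
      have h3 := step2 _ h2
      have h4 := step3 _ h3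
      exact ⟨h1, h2, h3, h4⟩
  -- partial quotients
  have hA : ∀ k : ℕ, cfA x (4 * k + 1) = 1 ∧ cfA x (4 * k + 2) = (n : ℤ) - 1 ∧
      cfA x (4 * k + 3) = 1 ∧ cfA x (4 * k + 4) = 2 * (n : ℤ) := by
    intro k
    obtain ⟨h1, h2, h3, h4⟩ := hcyc k
    exact ⟨by rw [cfA, h1, hf1], by rw [cfA, h2, hf2], by rw [cfA, h3, hf3],
      by rw [cfA, h4, hf4]⟩
  refine ⟨by rw [cfA, hX0, hfx], hA, ?_⟩
  -- the period is 4
  have h4mem : 4 ∈ {p : ℕ | 0 < p ∧ ∀ m : ℕ, 1 ≤ m → cfA x (m + p) = cfA x m} := by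
    refine ⟨by norm_num, fun m hm => ?_⟩
    obtain ⟨q, r, hr, hmq⟩ : ∃ q r, r < 4 ∧ m = 4 * q + r + 1 :=
      ⟨(m - 1) / 4, (m - 1) % 4, Nat.mod_lt _ (by norm_num), by omega⟩
    interval_cases r
    · rw [show m + 4 = 4 * (q + 1) + 1 by omega, show m = 4 * q + 1 by omega,
        (hA (q + 1)).1, (hA q).1]
    · rw [show m + 4 = 4 * (q + 1) + 2 by omega, show m = 4 * q + 2 by omega,
        (hA (q + 1)).2.1, (hA q).2.1]
    · rw [show m + 4 = 4 * (q + 1) + 3 by omega, show m = 4 * q + 3 by omega,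
        (hA (q + 1)).2.2.1, (hA q).2.2.1]
    · rw [show m + 4 = 4 * (q + 1) + 4 by omega, show m = 4 * q + 4 by omega,
        (hA (q + 1)).2.2.2, (hA q).2.2.2]
  refine le_antisymm (Nat.sInf_le h4mem) (le_csInf ⟨4, h4mem⟩ ?_)
  rintro p ⟨hp, hper⟩
  by_contra hlt
  push_neg at hlt
  have hni : (2 : ℤ) ≤ (n : ℤ) := by exact_mod_cast hn
  interval_cases p
  · have := hper 3 (by norm_num)
    rw [show (3 + 1 : ℕ) = 4 * 0 + 4 by norm_num, show (3 : ℕ) = 4 * 0 + 3 by norm_num,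
      (hA 0).2.2.2, (hA 0).2.2.1] at this
    omega
  · have := hper 2 (by norm_num)
    rw [show (2 + 2 : ℕ) = 4 * 0 + 4 by norm_num, show (2 : ℕ) = 4 * 0 + 2 by norm_num,
      (hA 0).2.2.2, (hA 0).2.1] at this
    omega
  · have := hper 1 (by norm_num)
    rw [show (1 + 3 : ℕ) = 4 * 0 + 4 by norm_num, (hA 0).2.2.2, (hA 0).1] at this
    omega
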